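/- For every integer N ≥ 2, with ω = exp(2πi/N), ∑_{k=1}^{N−1} 1/|ω^k − 1|^2 = (N^2 − 1)/12. -/

import Mathlib

open Real

private lemma deriv_geom_aux (z : ℂ) (n : ℕ) :
    (1 - z) * ∑ j ∈ Finset.range n, (j : ℂ) * z ^ j
      = (∑ i ∈ Finset.range n, z ^ i) - 1 - ((n : ℂ) - 1) * z ^ n := by
  induction n with
  | zero => simp
  | succ n ih =>
    rw [Finset.sum_range_succ, Finset.sum_range_succ, mul_add, ih]
    push_cast
    ring

private lemma sum_id_aux (n : ℕ) :
    (∑ j ∈ Finset.range n, (j : ℂ)) * 2 = (n : ℂ) * ((n : ℂ) - 1) := by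
  induction n with
  | zero => simp
  | succ n ih =>
    rw [Finset.sum_range_succ, add_mul, ih]
    push_cast
    ring

private lemma sum_sq_aux (n : ℕ) :
    (∑ j ∈ Finset.range n, (j : ℂ) ^ 2) * 6
      = (n : ℂ) * ((n : ℂ) - 1) * (2 * (n : ℂ) - 1) := by
  induction n with
  | zero => simp
  | succ n ih =>
    rw [Finset.sum_range_succ, add_mul, ih]
    push_cast
    ring

/-- For every integer `N ≥ 2` with `ω = exp(2πi/N)`,
`∑_{k=1}^{N−1} 1/|ω^k − 1|² = (N² − 1)/12`. -/
theorem sum_inv_abs_sq (N : ℕ) (hN : 2 ≤ N) (ω : ℂ)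
    (hω : ω = Complex.exp (2 * π * Complex.I / N)) :
    ∑ k ∈ Finset.Icc 1 (N - 1), 1 / ‖ω ^ k - 1‖ ^ 2 = ((N : ℝ) ^ 2 - 1) / 12 := by
  have hN0 : N ≠ 0 := by omega
  have hprim : IsPrimitiveRoot ω N := by
    rw [hω]; exact Complex.isPrimitiveRoot_exp N hN0
  have hωN : ω ^ N = 1 := hprim.pow_eq_one
  have hωnorm : ‖ω‖ = 1 := by
    have h : (2 * (π : ℂ) * Complex.I / N) = ((2 * π / N : ℝ) : ℂ) * Complex.I := by
      push_cast; ring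
    rw [hω, h, Complex.norm_exp]
    simp [Complex.mul_re]
  have hconj : (starRingEnd ℂ) ω = ω⁻¹ := (Complex.inv_eq_conj hωnorm).symm
  have hω0 : ω ≠ 0 := by
    intro h; rw [h] at hωN; simp [zero_pow hN0] at hωN
  -- the auxiliary sums
  set S : ℕ → ℂ := fun k => ∑ j ∈ Finset.range N, (j : ℂ) * (ω ^ k) ^ j with hSdef
  -- membership facts
  have hkfacts : ∀ k ∈ Finset.Icc 1 (N - 1), ω ^ k ≠ 1 ∧ (ω ^ k) ^ N = 1 := by
    intro k hk
    rw [Finset.mem_Icc] at hk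
    refine ⟨hprim.pow_ne_one_of_pos_of_lt (by omega) (by omega), ?_⟩
    rw [← pow_mul, mul_comm, pow_mul, hωN, one_pow]
  -- key: each term equals normSq (S k) / N^2
  have key : ∀ k ∈ Finset.Icc 1 (N - 1),
      1 / ‖ω ^ k - 1‖ ^ 2 = Complex.normSq (S k) / (N : ℝ) ^ 2 := by
    intro k hk
    obtain ⟨hne, hpow⟩ := hkfacts k hk
    have hgeom : ∑ i ∈ Finset.range N, (ω ^ k) ^ i = 0 := by
      rw [geom_sum_eq hne, hpow]; simp
    have hS : (1 - ω ^ k) * S k = -(N : ℂ) := by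
      rw [hSdef]
      rw [deriv_geom_aux (ω ^ k) N, hgeom, hpow]
      ring
    have h1 : Complex.normSq (1 - ω ^ k) * Complex.normSq (S k) = (N : ℝ) ^ 2 := by
      rw [← Complex.normSq_mul, hS]
      simp [Complex.normSq_apply]
      ring
    have h2 : ‖ω ^ k - 1‖ ^ 2 = Complex.normSq (1 - ω ^ k) := by
      rw [Complex.sq_norm, ← Complex.normSq_neg]; ring_nf
    have hnz : Complex.normSq (1 - ω ^ k) ≠ 0 := by
      simp only [ne_eq, Complex.normSq_eq_zero, sub_eq_zero]
      exact fun h => hne h.symm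
    rw [h2]
    field_simp
    linarith [h1]
  rw [Finset.sum_congr rfl key, ← Finset.sum_div]
  -- now compute the complex sum ∑ S k * conj (S k)
  have hC : ∑ k ∈ Finset.Icc 1 (N - 1), S k * (starRingEnd ℂ) (S k)
      = (N : ℂ) ^ 2 * ((N : ℂ) ^ 2 - 1) / 12 := by
    have hterm : ∀ k, S k * (starRingEnd ℂ) (S k)
        = ∑ j ∈ Finset.range N, ∑ l ∈ Finset.range N,
            ((j : ℂ) * (l : ℂ)) * (ω ^ j * (ω⁻¹) ^ l) ^ k := by
      intro k
      rw [hSdef]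
      simp only [map_sum, map_mul, map_pow, map_natCast, hconj]
      rw [Finset.sum_mul_sum]
      refine Finset.sum_congr rfl fun j _ => Finset.sum_congr rfl fun l _ => ?_
      rw [mul_pow, ← pow_mul, ← pow_mul, ← pow_mul, ← pow_mul]
      ring_nf
    simp only [hterm]
    rw [Finset.sum_comm]
    have hswap : ∀ j ∈ Finset.range N,
        (∑ k ∈ Finset.Icc 1 (N-1), ∑ l ∈ Finset.range N,
          ((j : ℂ) * (l : ℂ)) * (ω ^ j * (ω⁻¹) ^ l) ^ k)
        = ∑ l ∈ Finset.range N, ((j : ℂ) * (l : ℂ)) *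
            (∑ k ∈ Finset.Icc 1 (N-1), (ω ^ j * (ω⁻¹) ^ l) ^ k) := by
      intro j _
      rw [Finset.sum_comm]
      exact Finset.sum_congr rfl fun l _ => by rw [Finset.mul_sum]
    rw [Finset.sum_congr rfl hswap]
    -- inner geometric sums
    have hinner : ∀ j ∈ Finset.range N, ∀ l ∈ Finset.range N,
        (∑ k ∈ Finset.Icc 1 (N-1), (ω ^ j * (ω⁻¹) ^ l) ^ k)
          = (if j = l then (N : ℂ) else 0) - 1 := by
      intro j hj l hl
      rw [Finset.mem_range] at hj hl
      set ζ : ℂ := ω ^ j * (ω⁻¹) ^ l with hζ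
      have hζN : ζ ^ N = 1 := by
        rw [hζ, mul_pow, ← pow_mul, ← pow_mul, mul_comm j N, mul_comm l N,
          pow_mul, pow_mul, hωN, inv_pow, hωN]
        simp
      have hrange : Finset.range N = insert 0 (Finset.Icc 1 (N-1)) := by
        ext x
        simp only [Finset.mem_range, Finset.mem_insert, Finset.mem_Icc]
        omega
      have hfull : ∑ k ∈ Finset.range N, ζ ^ k = (if ζ = 1 then (N : ℂ) else 0) := by
        by_cases h : ζ = 1
        · simp [h]
        · rw [geom_sum_eq h, hζN]; simp [h]
      have hsplit : ∑ k ∈ Finset.range N, ζ ^ k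
          = 1 + ∑ k ∈ Finset.Icc 1 (N-1), ζ ^ k := by
        rw [hrange, Finset.sum_insert (by simp), pow_zero]
      have hζ1 : (ζ = 1) ↔ (j = l) := by
        constructor
        · intro h
          have : ω ^ j = ω ^ l := by
            have := h
            rw [hζ, inv_pow] at this
            field_simp at this
            exact this
          exact hprim.pow_inj hj hl this
        · intro h; rw [hζ, h, inv_pow]; field_simp
      have : ∑ k ∈ Finset.Icc 1 (N-1), ζ ^ k
          = (if ζ = 1 then (N : ℂ) else 0) - 1 := by
        rw [← hfull, hsplit]; ring
      rw [this]
      by_cases h : j = l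
      · simp [hζ1.mpr h, h]
      · rw [if_neg h, if_neg (fun hc => h (hζ1.mp hc))]
    have step : (∑ j ∈ Finset.range N, ∑ l ∈ Finset.range N,
        ((j : ℂ) * (l : ℂ)) * (∑ k ∈ Finset.Icc 1 (N-1), (ω ^ j * (ω⁻¹) ^ l) ^ k))
        = ∑ j ∈ Finset.range N, ∑ l ∈ Finset.range N,
            ((j : ℂ) * (l : ℂ)) * ((if j = l then (N : ℂ) else 0) - 1) :=
      Finset.sum_congr rfl fun j hj => Finset.sum_congr rfl fun l hl => by
        rw [hinner j hj l hl]
    rw [step]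
    -- now a pure algebraic computation
    have expand : ∀ j ∈ Finset.range N,
        (∑ l ∈ Finset.range N, ((j : ℂ) * (l : ℂ)) * ((if j = l then (N : ℂ) else 0) - 1))
        = (N : ℂ) * (j : ℂ) ^ 2 - (j : ℂ) * ∑ l ∈ Finset.range N, (l : ℂ) := by
      intro j hj
      have : ∀ l ∈ Finset.range N,
          ((j : ℂ) * (l : ℂ)) * ((if j = l then (N : ℂ) else 0) - 1)
          = (if l = j then (N : ℂ) * (j : ℂ)^2 else 0) - (j : ℂ) * (l : ℂ) := by
        intro l _
        by_cases h : j = l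
        · subst h; simp; ring
        · rw [if_neg h, if_neg (fun hc => h hc.symm)]; ring
      rw [Finset.sum_congr rfl this, Finset.sum_sub_distrib,
        Finset.sum_ite_eq' (Finset.range N) j (fun _ => (N : ℂ) * (j : ℂ)^2),
        if_pos hj, ← Finset.mul_sum]
    rw [Finset.sum_congr rfl expand, Finset.sum_sub_distrib, ← Finset.mul_sum,
      ← Finset.sum_mul]
    have h1 := sum_id_aux N
    have h2 := sum_sq_aux N
    have h3 : ∀ j ∈ Finset.range N, (j : ℂ)^2 = (j:ℂ)^2 := fun _ _ => rfl
    -- express sums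
    set A : ℂ := ∑ j ∈ Finset.range N, (j : ℂ) with hA
    set B : ℂ := ∑ j ∈ Finset.range N, (j : ℂ)^2 with hB
    -- goal: N * B - A * A = N^2 (N^2-1)/12
    linear_combination ((N : ℂ) / 6) * h2 + (-(A / 2) - (N : ℂ) * ((N : ℂ) - 1) / 4) * h1
  -- transfer to the real statement
  have hreal : (∑ k ∈ Finset.Icc 1 (N-1), Complex.normSq (S k))
      = (N : ℝ) ^ 2 * ((N : ℝ) ^ 2 - 1) / 12 := by
    have : ((∑ k ∈ Finset.Icc 1 (N-1), Complex.normSq (S k) : ℝ) : ℂ)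
        = (N : ℂ) ^ 2 * ((N : ℂ) ^ 2 - 1) / 12 := by
      push_cast
      rw [← hC]
      exact Finset.sum_congr rfl fun k _ => (Complex.mul_conj (S k)).symm
    rw [show ((N : ℂ) ^ 2 * ((N : ℂ) ^ 2 - 1) / 12)
        = (((N : ℝ) ^ 2 * ((N : ℝ) ^ 2 - 1) / 12 : ℝ) : ℂ) by push_cast; ring] at this
    exact_mod_cast this
  rw [hreal]
  have hNne : (N : ℝ) ^ 2 ≠ 0 := by positivity
  field_simp
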